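/- Let K ⊆ ℚ ∩ [0,1] be a set that is compact as a subset of ℝ. Then K contains 0% of the rationals in [0,1] in the sense of height: the number of elements of K with reduced denominator at most N is o(N^2) as N → ∞. -/

import Mathlib

open Filter

lemma rat_spacing (a b : ℚ) (h : a ≠ b) :
    1 / ((a.den : ℝ) * b.den) ≤ |(a : ℝ) - (b : ℝ)| := by
  have ha : (a.den : ℝ) ≠ 0 := Nat.cast_ne_zero.2 a.den_nz
  have hb : (b.den : ℝ) ≠ 0 := Nat.cast_ne_zero.2 b.den_nz
  set k : ℤ := a.num * b.den - b.num * a.den with hk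
  have hab : (a : ℝ) - (b : ℝ) = (k : ℝ) / ((a.den : ℝ) * b.den) := by
    rw [Rat.cast_def, Rat.cast_def]
    push_cast [hk]
    field_simp
  have hk0 : k ≠ 0 := by
    intro h0
    apply h
    have := hab
    rw [h0] at this
    simp at this
    have : (a : ℝ) = (b : ℝ) := by linarith
    exact_mod_cast this
  have h1 : (1 : ℝ) ≤ |(k : ℝ)| := by
    have : (1 : ℤ) ≤ |k| := Int.one_le_abs hk0
    calc (1:ℝ) = ((1:ℤ):ℝ) := by norm_num
    _ ≤ ((|k|:ℤ):ℝ) := by exact_mod_cast this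
    _ = |(k:ℝ)| := by push_cast; ring
  rw [hab, abs_div]
  have hpos : (0:ℝ) < (a.den : ℝ) * b.den := by positivity
  rw [abs_of_pos hpos]
  gcongr

open Filter MeasureTheory Metric
open scoped ENNReal

theorem stmt18 (K : Set ℝ) (hK : IsCompact K)
    (hKQ : K ⊆ {x : ℝ | (∃ q : ℚ, (q : ℝ) = x)} ∩ Set.Icc 0 1) :
    Tendsto (fun N : ℕ =>
        (Nat.card {q : ℚ // (q : ℝ) ∈ K ∧ q.den ≤ N} : ℝ) / (N : ℝ) ^ 2)
      atTop (nhds 0) := by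
  have hcount : K.Countable := by
    apply Set.Countable.mono _ (Set.countable_range ((↑) : ℚ → ℝ))
    intro x hx
    exact (hKQ hx).1
  have hnull : volume K = 0 := hcount.measure_zero _
  rw [Metric.tendsto_atTop]
  intro ε hε
  obtain ⟨U, hKU, hUopen, hUvol⟩ :=
    Set.exists_isOpen_lt_of_lt K (ENNReal.ofReal (ε / 2))
      (by rw [hnull]; exact ENNReal.ofReal_pos.2 (by linarith))
  obtain ⟨δ, hδ, hthick⟩ := hK.exists_thickening_subset_open hUopen hKU
  obtain ⟨N₀, hN₀⟩ := exists_nat_gt (1 / δ)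
  refine ⟨N₀ + 1, fun N hN => ?_⟩
  have hN1 : 1 ≤ N := le_trans (Nat.le_add_left 1 N₀) hN
  have hNpos : (0 : ℝ) < N := by exact_mod_cast hN1
  have hNge1 : (1 : ℝ) ≤ N := by exact_mod_cast hN1
  have hrδ : 1 / (2 * (N : ℝ) ^ 2) ≤ δ := by
    have h1 : (1:ℝ)/δ < N := hN₀.trans_le (by exact_mod_cast Nat.le_of_succ_le hN)
    rw [div_lt_iff₀ hδ] at h1
    rw [div_le_iff₀ (by positivity)]
    nlinarith
  set r : ℝ := 1 / (2 * (N : ℝ) ^ 2) with hr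
  have hrpos : 0 < r := by positivity
  set A : Set ℚ := {q : ℚ | (q : ℝ) ∈ K ∧ q.den ≤ N} with hA
  have hAfin : A.Finite := by
    apply Set.Finite.subset (((Set.finite_Icc (-(N:ℤ)) N).prod
      (Set.finite_Icc (-(N:ℤ)) N)).image (fun p : ℤ × ℤ => (p.1 : ℚ) / (p.2 : ℚ)))
    rintro q ⟨hqK, hqden⟩
    have hq01 : (q : ℝ) ∈ Set.Icc (0:ℝ) 1 := (hKQ hqK).2
    have hq0 : (0:ℚ) ≤ q := by exact_mod_cast hq01.1
    have hq1 : q ≤ 1 := by exact_mod_cast hq01.2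
    have hnum0 : 0 ≤ q.num := Rat.num_nonneg.2 hq0
    have hdenpos : (0:ℚ) < (q.den : ℚ) := by exact_mod_cast q.pos
    have hnum1 : q.num ≤ (q.den : ℤ) := by
      rw [← Rat.num_div_den q, div_le_one hdenpos] at hq1
      exact_mod_cast hq1
    have hdN : (q.den : ℤ) ≤ (N : ℤ) := by exact_mod_cast hqden
    refine ⟨(q.num, (q.den : ℤ)), ⟨⟨by linarith, le_trans hnum1 hdN⟩,
      ⟨by linarith, hdN⟩⟩, ?_⟩
    simp [Rat.num_div_den]
  have hballs : ∀ q ∈ hAfin.toFinset, ball ((q:ℚ):ℝ) r ⊆ U := by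
    intro q hq
    rw [Set.Finite.mem_toFinset] at hq
    exact subset_trans (subset_trans (ball_subset_ball hrδ)
      (ball_subset_thickening hq.1 δ)) hthick
  have hdisj : (hAfin.toFinset : Set ℚ).PairwiseDisjoint
      (fun q : ℚ => ball ((q:ℚ):ℝ) r) := by
    intro p hp q hq hpq
    rw [Set.Finite.coe_toFinset] at hp hq
    apply ball_disjoint_ball
    have hsp := rat_spacing p q hpq
    have hbd : 1 / ((N:ℝ) * N) ≤ |(p:ℝ) - (q:ℝ)| := by
      refine le_trans ?_ hsp
      apply one_div_le_one_div_of_le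
      · have := p.pos
        have := q.pos
        have h1 : (0:ℝ) < (p.den : ℝ) := by exact_mod_cast p.pos
        have h2 : (0:ℝ) < (q.den : ℝ) := by exact_mod_cast q.pos
        positivity
      · have h1 : (p.den : ℝ) ≤ N := by exact_mod_cast hp.2
        have h2 : (q.den : ℝ) ≤ N := by exact_mod_cast hq.2
        have h3 : (0:ℝ) < (p.den : ℝ) := by exact_mod_cast p.pos
        have h4 : (0:ℝ) < (q.den : ℝ) := by exact_mod_cast q.pos
        exact mul_le_mul h1 h2 h4.le hNpos.le
    rw [Real.dist_eq]
    calc r + r = 1 / ((N:ℝ) * N) := by rw [hr]; ring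
      _ ≤ |(p:ℝ) - (q:ℝ)| := hbd
  have hmeas := measure_biUnion_finset hdisj (fun q _ => measurableSet_ball)
    (μ := volume)
  have hsub : (⋃ q ∈ hAfin.toFinset, ball ((q:ℚ):ℝ) r) ⊆ U :=
    Set.iUnion₂_subset hballs
  have hle : (hAfin.toFinset.card : ℝ≥0∞) * ENNReal.ofReal (2 * r)
      < ENNReal.ofReal (ε / 2) := by
    calc (hAfin.toFinset.card : ℝ≥0∞) * ENNReal.ofReal (2 * r)
        = ∑ q ∈ hAfin.toFinset, volume (ball ((q:ℚ):ℝ) r) := by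
          simp [Real.volume_ball, Finset.sum_const, nsmul_eq_mul]
      _ = volume (⋃ q ∈ hAfin.toFinset, ball ((q:ℚ):ℝ) r) := hmeas.symm
      _ ≤ volume U := measure_mono hsub
      _ < ENNReal.ofReal (ε / 2) := hUvol
  have hcard : Nat.card {q : ℚ // (q : ℝ) ∈ K ∧ q.den ≤ N} = hAfin.toFinset.card := by
    have h1 : Nat.card {q : ℚ // (q : ℝ) ∈ K ∧ q.den ≤ N} = Nat.card A := rfl
    rw [h1, Nat.card_coe_set_eq, Set.ncard_eq_toFinset_card _ hAfin]
  have hreal : (hAfin.toFinset.card : ℝ) * (2 * r) < ε / 2 := by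
    rw [← ENNReal.ofReal_natCast, ← ENNReal.ofReal_mul (by positivity)] at hle
    exact (ENNReal.ofReal_lt_ofReal_iff (by linarith)).mp hle
  have h2r : (2 : ℝ) * r = 1 / (N:ℝ)^2 := by rw [hr]; ring
  rw [Real.dist_eq, sub_zero, abs_of_nonneg (by positivity), hcard]
  calc (hAfin.toFinset.card : ℝ) / (N:ℝ)^2
      = (hAfin.toFinset.card : ℝ) * (2 * r) := by rw [h2r]; ring
    _ < ε / 2 := hreal
    _ < ε := by linarith
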